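/- Let r₁, r₂ ∈ (0,1] and f, g : [a,b] → ℝ be functions of r₁-bounded variation and r₂-bounded variation respectively. Then the pointwise product fg is of max(r₁,r₂)-bounded variation. -/
import Mathlib


/-- The set of `r`-variation sums of `f` over partitions of `[a,b]`. -/
def rVarSums (r a b : ℝ) (f : ℝ → ℝ) : Set ℝ :=
  {s | ∃ (n : ℕ) (x : ℕ → ℝ), x 0 = a ∧ x n = b ∧ (∀ i, i < n → x i < x (i + 1)) ∧
    s = ∑ i ∈ Finset.range n, |f (x (i + 1)) - f (x i)| ^ r}

lemma real_add_rpow_le {u v p : ℝ} (hu : 0 ≤ u) (hv : 0 ≤ v) (hp : 0 ≤ p) (hp1 : p ≤ 1) :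
    (u + v) ^ p ≤ u ^ p + v ^ p := by
  lift u to NNReal using hu
  lift v to NNReal using hv
  exact_mod_cast NNReal.rpow_add_le_add_rpow u v hp hp1

/-- `d ^ r ≤ d ^ r' * D ^ (r - r')` when `0 ≤ d ≤ D`, `1 ≤ D`, `0 < r' ≤ r`. -/
lemma rpow_exp_mono {d D r r' : ℝ} (hd : 0 ≤ d) (hdD : d ≤ D) (hD : 1 ≤ D)
    (hr' : 0 < r') (hrr : r' ≤ r) : d ^ r ≤ d ^ r' * D ^ (r - r') := by
  rcases eq_or_lt_of_le hd with h | h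
  · rw [← h, Real.zero_rpow (by linarith : r ≠ 0), Real.zero_rpow hr'.ne', zero_mul]
  · have : d ^ r = d ^ r' * d ^ (r - r') := by
      rw [← Real.rpow_add h]; ring_nf
    rw [this]
    have h1 : d ^ (r - r') ≤ D ^ (r - r') :=
      Real.rpow_le_rpow hd hdD (by linarith)
    exact mul_le_mul_of_nonneg_left h1 (Real.rpow_nonneg hd _)

/-- Functions of r-bounded variation (0 < r ≤ 1) are bounded on [a,b]. -/
lemma bdd_of_rvar {r a b : ℝ} {f : ℝ → ℝ} (hr : r ∈ Set.Ioc (0:ℝ) 1) (hab : a < b)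
    {M : ℝ} (hM : M ∈ upperBounds (rVarSums r a b f)) :
    ∃ F : ℝ, 0 ≤ F ∧ ∀ c ∈ Set.Icc a b, |f c| ≤ F := by
  obtain ⟨hr0, hr1⟩ := hr
  have hM0 : 0 ≤ M := by
    have h1 : |f b - f a| ^ r ∈ rVarSums r a b f := by
      refine ⟨1, fun i => if i = 0 then a else b, by simp, by simp, ?_, by simp⟩
      intro i hi
      interval_cases i
      simp [hab]
    exact le_trans (Real.rpow_nonneg (abs_nonneg _) r) (hM h1)
  refine ⟨|f a| + M ^ (1/r), by positivity, ?_⟩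
  intro c hc
  -- key : |f c - f a| ^ r ≤ M
  have key : |f c - f a| ^ r ≤ M := by
    rcases eq_or_lt_of_le hc.1 with h | hac
    · rw [← h, sub_self, abs_zero, Real.zero_rpow hr0.ne']; exact hM0
    rcases eq_or_lt_of_le hc.2 with h | hcb
    · subst h
      have h1 : |f c - f a| ^ r ∈ rVarSums r a c f := by
        refine ⟨1, fun i => if i = 0 then a else c, by simp, by simp, ?_, by simp⟩
        intro i hi
        interval_cases i
        simp [hac]
      exact hM h1
    · have h1 : |f c - f a| ^ r + |f b - f c| ^ r ∈ rVarSums r a b f := by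
        refine ⟨2, fun i => if i = 0 then a else if i = 1 then c else b, by simp, by simp, ?_, ?_⟩
        · intro i hi
          interval_cases i <;> simp [hac, hcb]
        · simp [Finset.sum_range_succ]
      exact le_trans (le_add_of_nonneg_right (Real.rpow_nonneg (abs_nonneg _) r)) (hM h1)
  have h2 : |f c - f a| ≤ M ^ (1/r) := by
    have := Real.rpow_le_rpow (Real.rpow_nonneg (abs_nonneg _) r) key
      (le_of_lt (by positivity : (0:ℝ) < 1/r))
    rwa [← Real.rpow_mul (abs_nonneg _), mul_one_div, div_self hr0.ne', Real.rpow_one] at this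
  calc |f c| = |f a + (f c - f a)| := by ring_nf
    _ ≤ |f a| + |f c - f a| := abs_add_le _ _
    _ ≤ |f a| + M ^ (1/r) := by linarith

theorem stmt_9 (r₁ r₂ a b : ℝ) (hr₁ : r₁ ∈ Set.Ioc (0:ℝ) 1) (hr₂ : r₂ ∈ Set.Ioc (0:ℝ) 1)
    (hab : a < b) (f g : ℝ → ℝ)
    (hf : BddAbove (rVarSums r₁ a b f)) (hg : BddAbove (rVarSums r₂ a b g)) :
    BddAbove (rVarSums (max r₁ r₂) a b (fun x => f x * g x)) := by
  obtain ⟨Mf, hMf⟩ := hf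
  obtain ⟨Mg, hMg⟩ := hg
  obtain ⟨F, hF0, hF⟩ := bdd_of_rvar hr₁ hab hMf
  obtain ⟨G, hG0, hG⟩ := bdd_of_rvar hr₂ hab hMg
  set r := max r₁ r₂ with hr_def
  have hr0 : 0 < r := lt_max_of_lt_left hr₁.1
  have hr1 : r ≤ 1 := max_le hr₁.2 hr₂.2
  have hMf0 : 0 ≤ Mf := by
    have h1 : |f b - f a| ^ r₁ ∈ rVarSums r₁ a b f := by
      refine ⟨1, fun i => if i = 0 then a else b, by simp, by simp, ?_, by simp⟩
      intro i hi; interval_cases i; simp [hab]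
    exact le_trans (Real.rpow_nonneg (abs_nonneg _) _) (hMf h1)
  have hMg0 : 0 ≤ Mg := by
    have h1 : |g b - g a| ^ r₂ ∈ rVarSums r₂ a b g := by
      refine ⟨1, fun i => if i = 0 then a else b, by simp, by simp, ?_, by simp⟩
      intro i hi; interval_cases i; simp [hab]
    exact le_trans (Real.rpow_nonneg (abs_nonneg _) _) (hMg h1)
  refine ⟨F ^ r * (2*G+1) ^ (r - r₂) * Mg + G ^ r * (2*F+1) ^ (r - r₁) * Mf, ?_⟩
  rintro s ⟨n, x, hx0, hxn, hmono, rfl⟩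
  -- the chain is monotone
  have hchain : ∀ j, j ≤ n → ∀ i, i ≤ j → x i ≤ x j := by
    intro j hj
    induction j with
    | zero => intro i hi; interval_cases i; rfl
    | succ k ih =>
      intro i hi
      by_cases h : i = k + 1
      · rw [h]
      · exact le_trans (ih (by omega) i (by omega)) (le_of_lt (hmono k (by omega)))
  have hmem : ∀ i, i ≤ n → x i ∈ Set.Icc a b := by
    intro i hi
    exact ⟨hx0 ▸ hchain i hi 0 (Nat.zero_le _), hxn ▸ hchain n le_rfl i hi⟩
  -- pointwise bound
  have hpt : ∀ i, i < n →
      |f (x (i+1)) * g (x (i+1)) - f (x i) * g (x i)| ^ r ≤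
        F ^ r * (2*G+1) ^ (r - r₂) * |g (x (i+1)) - g (x i)| ^ r₂ +
        G ^ r * (2*F+1) ^ (r - r₁) * |f (x (i+1)) - f (x i)| ^ r₁ := by
    intro i hi
    have hxi := hmem i (le_of_lt hi)
    have hxi1 := hmem (i+1) hi
    set u := |g (x (i+1)) - g (x i)| with hu
    set v := |f (x (i+1)) - f (x i)| with hv
    have hu0 : 0 ≤ u := abs_nonneg _
    have hv0 : 0 ≤ v := abs_nonneg _
    have step1 : |f (x (i+1)) * g (x (i+1)) - f (x i) * g (x i)| ≤ F * u + G * v := by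
      have : f (x (i+1)) * g (x (i+1)) - f (x i) * g (x i)
          = f (x (i+1)) * (g (x (i+1)) - g (x i)) + g (x i) * (f (x (i+1)) - f (x i)) := by ring
      rw [this]
      calc |f (x (i+1)) * (g (x (i+1)) - g (x i)) + g (x i) * (f (x (i+1)) - f (x i))|
          ≤ |f (x (i+1)) * (g (x (i+1)) - g (x i))| + |g (x i) * (f (x (i+1)) - f (x i))| :=
            abs_add_le _ _
        _ = |f (x (i+1))| * u + |g (x i)| * v := by rw [abs_mul, abs_mul]
        _ ≤ F * u + G * v :=
            add_le_add (mul_le_mul_of_nonneg_right (hF _ hxi1) hu0)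
              (mul_le_mul_of_nonneg_right (hG _ hxi) hv0)
    have step2 : |f (x (i+1)) * g (x (i+1)) - f (x i) * g (x i)| ^ r ≤ (F*u + G*v) ^ r :=
      Real.rpow_le_rpow (abs_nonneg _) step1 hr0.le
    have step3 : (F*u + G*v) ^ r ≤ (F*u) ^ r + (G*v) ^ r :=
      real_add_rpow_le (by positivity) (by positivity) hr0.le hr1
    have step4 : (F*u) ^ r = F ^ r * u ^ r := Real.mul_rpow hF0 hu0
    have step5 : (G*v) ^ r = G ^ r * v ^ r := Real.mul_rpow hG0 hv0
    have hu_le : u ≤ 2*G+1 := by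
      have := abs_sub_abs_le_abs_sub (g (x (i+1))) (g (x i))
      have h1 := hG _ hxi1
      have h2 := hG _ hxi
      calc u ≤ |g (x (i+1))| + |g (x i)| := abs_sub _ _
        _ ≤ 2*G+1 := by linarith
    have hv_le : v ≤ 2*F+1 := by
      have h1 := hF _ hxi1
      have h2 := hF _ hxi
      calc v ≤ |f (x (i+1))| + |f (x i)| := abs_sub _ _
        _ ≤ 2*F+1 := by linarith
    have step6 : u ^ r ≤ u ^ r₂ * (2*G+1) ^ (r - r₂) :=
      rpow_exp_mono hu0 hu_le (by linarith) hr₂.1 (le_max_right _ _)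
    have step7 : v ^ r ≤ v ^ r₁ * (2*F+1) ^ (r - r₁) :=
      rpow_exp_mono hv0 hv_le (by linarith) hr₁.1 (le_max_left _ _)
    calc |f (x (i+1)) * g (x (i+1)) - f (x i) * g (x i)| ^ r
        ≤ (F*u) ^ r + (G*v) ^ r := le_trans step2 step3
      _ = F ^ r * u ^ r + G ^ r * v ^ r := by rw [step4, step5]
      _ ≤ F ^ r * (u ^ r₂ * (2*G+1) ^ (r - r₂)) + G ^ r * (v ^ r₁ * (2*F+1) ^ (r - r₁)) :=
          add_le_add (mul_le_mul_of_nonneg_left step6 (Real.rpow_nonneg hF0 _))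
            (mul_le_mul_of_nonneg_left step7 (Real.rpow_nonneg hG0 _))
      _ = F ^ r * (2*G+1) ^ (r - r₂) * u ^ r₂ + G ^ r * (2*F+1) ^ (r - r₁) * v ^ r₁ := by ring
  have hsum_g : ∑ i ∈ Finset.range n, |g (x (i+1)) - g (x i)| ^ r₂ ≤ Mg :=
    hMg ⟨n, x, hx0, hxn, hmono, rfl⟩
  have hsum_f : ∑ i ∈ Finset.range n, |f (x (i+1)) - f (x i)| ^ r₁ ≤ Mf :=
    hMf ⟨n, x, hx0, hxn, hmono, rfl⟩
  have c1 : (0:ℝ) ≤ F ^ r * (2*G+1) ^ (r - r₂) := by positivity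
  have c2 : (0:ℝ) ≤ G ^ r * (2*F+1) ^ (r - r₁) := by positivity
  calc ∑ i ∈ Finset.range n, |f (x (i+1)) * g (x (i+1)) - f (x i) * g (x i)| ^ r
      ≤ ∑ i ∈ Finset.range n,
          (F ^ r * (2*G+1) ^ (r - r₂) * |g (x (i+1)) - g (x i)| ^ r₂ +
           G ^ r * (2*F+1) ^ (r - r₁) * |f (x (i+1)) - f (x i)| ^ r₁) :=
        Finset.sum_le_sum (fun i hi => hpt i (Finset.mem_range.mp hi))
    _ = F ^ r * (2*G+1) ^ (r - r₂) * (∑ i ∈ Finset.range n, |g (x (i+1)) - g (x i)| ^ r₂) +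
        G ^ r * (2*F+1) ^ (r - r₁) * (∑ i ∈ Finset.range n, |f (x (i+1)) - f (x i)| ^ r₁) := by
        rw [Finset.sum_add_distrib, Finset.mul_sum, Finset.mul_sum]
    _ ≤ F ^ r * (2*G+1) ^ (r - r₂) * Mg + G ^ r * (2*F+1) ^ (r - r₁) * Mf :=
        add_le_add (mul_le_mul_of_nonneg_left hsum_g c1)
          (mul_le_mul_of_nonneg_left hsum_f c2)
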